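/- Let k₁, k₂, l₁, l₂ ∈ ℤ and define φ : ℝ² → ℝ⁴ by φ(u,v) = (1/√2)(cos(k₁u+k₂v), sin(k₁u+k₂v), cos(l₁u+l₂v), sin(l₁u+l₂v)). Set e = ½(k₁²+k₂²+l₁²+l₂²). Then the identity Δφ(u,v) + e·φ(u,v) = 0 holds for all (u,v) ∈ ℝ² if and only if k₁²+k₂² = l₁²+l₂². -/

import Mathlib

/-!
STATEMENT 0: The map φ : ℝ² → ℝ⁴,
φ(u,v) = (1/√2)(cos(k₁u+k₂v), sin(k₁u+k₂v), cos(l₁u+l₂v), sin(l₁u+l₂v)),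
with e = ½(k₁²+k₂²+l₁²+l₂²), satisfies Δφ + e·φ = 0 identically
(Δ the componentwise Euclidean Laplacian ∂²/∂u² + ∂²/∂v²)
if and only if k₁²+k₂² = l₁²+l₂².
-/

lemma deriv_cos_lin (a b c : ℝ) :
    deriv (fun u => c * Real.cos (a*u+b)) = fun u => c * (-a * Real.sin (a*u+b)) := by
  funext u
  have h : HasDerivAt (fun u : ℝ => a*u+b) a u := by
    simpa using ((hasDerivAt_id u).const_mul a).add_const b
  have := ((Real.hasDerivAt_cos (a*u+b)).comp u h).const_mul c
  convert this.deriv using 1; rfl; ring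

lemma deriv_sin_lin (a b c : ℝ) :
    deriv (fun u => c * Real.sin (a*u+b)) = fun u => c * (a * Real.cos (a*u+b)) := by
  funext u
  have h : HasDerivAt (fun u : ℝ => a*u+b) a u := by
    simpa using ((hasDerivAt_id u).const_mul a).add_const b
  have := ((Real.hasDerivAt_sin (a*u+b)).comp u h).const_mul c
  convert this.deriv using 1; rfl; ring

lemma iter2_cos_lin (a b c u : ℝ) :
    iteratedDeriv 2 (fun u => c * Real.cos (a*u+b)) u = -a^2 * (c * Real.cos (a*u+b)) := by
  rw [iteratedDeriv_succ, iteratedDeriv_one, deriv_cos_lin]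
  have : (fun u => c * (-a * Real.sin (a*u+b))) = fun u => (c * -a) * Real.sin (a*u+b) := by
    funext u; ring
  rw [this, deriv_sin_lin]; ring

lemma iter2_sin_lin (a b c u : ℝ) :
    iteratedDeriv 2 (fun u => c * Real.sin (a*u+b)) u = -a^2 * (c * Real.sin (a*u+b)) := by
  rw [iteratedDeriv_succ, iteratedDeriv_one, deriv_sin_lin]
  have : (fun u => c * (a * Real.cos (a*u+b))) = fun u => (c * a) * Real.cos (a*u+b) := by
    funext u; ring
  rw [this, deriv_cos_lin]; ring

lemma iter2_cos_lin' (a b c u : ℝ) :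
    iteratedDeriv 2 (fun u => c * Real.cos (b+a*u)) u = -a^2 * (c * Real.cos (b+a*u)) := by
  have : (fun u => c * Real.cos (b+a*u)) = fun u => c * Real.cos (a*u+b) := by
    funext u; rw [add_comm]
  rw [this, iter2_cos_lin, add_comm]

lemma iter2_sin_lin' (a b c u : ℝ) :
    iteratedDeriv 2 (fun u => c * Real.sin (b+a*u)) u = -a^2 * (c * Real.sin (b+a*u)) := by
  have : (fun u => c * Real.sin (b+a*u)) = fun u => c * Real.sin (a*u+b) := by
    funext u; rw [add_comm]
  rw [this, iter2_sin_lin, add_comm]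

lemma iter2_cos_lin1 (a b u : ℝ) :
    iteratedDeriv 2 (fun u => Real.cos (a*u+b)) u = -a^2 * Real.cos (a*u+b) := by
  have := iter2_cos_lin a b 1 u; simp only [one_mul] at this; exact this

lemma iter2_sin_lin1 (a b u : ℝ) :
    iteratedDeriv 2 (fun u => Real.sin (a*u+b)) u = -a^2 * Real.sin (a*u+b) := by
  have := iter2_sin_lin a b 1 u; simp only [one_mul] at this; exact this

lemma iter2_cos_lin1' (a b u : ℝ) :
    iteratedDeriv 2 (fun u => Real.cos (b+a*u)) u = -a^2 * Real.cos (b+a*u) := by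
  have := iter2_cos_lin' a b 1 u; simp only [one_mul] at this; exact this

lemma iter2_sin_lin1' (a b u : ℝ) :
    iteratedDeriv 2 (fun u => Real.sin (b+a*u)) u = -a^2 * Real.sin (b+a*u) := by
  have := iter2_sin_lin' a b 1 u; simp only [one_mul] at this; exact this

/-- The componentwise Euclidean Laplacian of a map `ℝ² → ℝ⁴`,
`Δf = ∂²f/∂u² + ∂²f/∂v²`. -/
noncomputable def lap2 (f : ℝ → ℝ → Fin 4 → ℝ) (u v : ℝ) : Fin 4 → ℝ :=
  fun i => iteratedDeriv 2 (fun u' => f u' v i) u + iteratedDeriv 2 (fun v' => f u v' i) v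

/-- The map `φ(u,v) = (1/√2)(cos(k₁u+k₂v), sin(k₁u+k₂v), cos(l₁u+l₂v), sin(l₁u+l₂v))`. -/
noncomputable def phiT (k₁ k₂ l₁ l₂ : ℤ) (u v : ℝ) : Fin 4 → ℝ :=
  fun i => (1 / Real.sqrt 2) *
    ![Real.cos ((k₁ : ℝ) * u + (k₂ : ℝ) * v), Real.sin ((k₁ : ℝ) * u + (k₂ : ℝ) * v),
      Real.cos ((l₁ : ℝ) * u + (l₂ : ℝ) * v), Real.sin ((l₁ : ℝ) * u + (l₂ : ℝ) * v)] i

lemma lap2_phiT (k₁ k₂ l₁ l₂ : ℤ) (u v : ℝ) (i : Fin 4) :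
    lap2 (phiT k₁ k₂ l₁ l₂) u v i =
      -(![(k₁:ℝ)^2+(k₂:ℝ)^2, (k₁:ℝ)^2+(k₂:ℝ)^2, (l₁:ℝ)^2+(l₂:ℝ)^2, (l₁:ℝ)^2+(l₂:ℝ)^2] i)
        * phiT k₁ k₂ l₁ l₂ u v i := by
  have c := (1:ℝ) / Real.sqrt 2
  fin_cases i <;> simp only [lap2, phiT] <;> simp <;>
    first
      | (rw [iter2_cos_lin1, iter2_cos_lin1']; ring)
      | (rw [iter2_sin_lin1, iter2_sin_lin1']; ring)

theorem stmt0 (k₁ k₂ l₁ l₂ : ℤ) :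
    (∀ u v : ℝ, ∀ i : Fin 4,
        lap2 (phiT k₁ k₂ l₁ l₂) u v i
          + (((k₁ : ℝ) ^ 2 + (k₂ : ℝ) ^ 2 + (l₁ : ℝ) ^ 2 + (l₂ : ℝ) ^ 2) / 2)
              * phiT k₁ k₂ l₁ l₂ u v i = 0)
      ↔ k₁ ^ 2 + k₂ ^ 2 = l₁ ^ 2 + l₂ ^ 2 := by
  have s2 : Real.sqrt 2 ≠ 0 := by positivity
  constructor
  · intro h
    have h0 := h 0 0 0
    rw [lap2_phiT] at h0
    simp only [phiT, Matrix.cons_val_zero, Fin.isValue, mul_zero, add_zero, Real.cos_zero,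
      mul_one] at h0
    have h0' : (((l₁:ℝ)^2+(l₂:ℝ)^2) - ((k₁:ℝ)^2+(k₂:ℝ)^2)) * (1 / Real.sqrt 2 / 2) = 0 := by
      linear_combination h0
    have hR : (k₁:ℝ)^2+(k₂:ℝ)^2 = (l₁:ℝ)^2+(l₂:ℝ)^2 := by
      rcases mul_eq_zero.mp h0' with h' | h'
      · linarith
      · exact absurd h' (by positivity)
    exact_mod_cast hR
  · intro h u v i
    have hR : (k₁:ℝ)^2+(k₂:ℝ)^2 = (l₁:ℝ)^2+(l₂:ℝ)^2 := by exact_mod_cast h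
    rw [lap2_phiT]
    have hv : ![(k₁:ℝ)^2+(k₂:ℝ)^2, (k₁:ℝ)^2+(k₂:ℝ)^2, (l₁:ℝ)^2+(l₂:ℝ)^2, (l₁:ℝ)^2+(l₂:ℝ)^2] i
        = (k₁:ℝ)^2+(k₂:ℝ)^2 := by
      fin_cases i <;> simp [hR]
    rw [hv]
    linear_combination (-(phiT k₁ k₂ l₁ l₂ u v i) / 2) * hR
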